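/- For any a ∈ ℕ and b ≥ 2, the cyclic Ramsey number of a star of order a versus the monotone cycle of order b equals 1 + (a−1)(b−1). -/

import Mathlib

open SimpleGraph Finset

/-- A symmetric `k`-edge-coloring `χ` of the complete graph on `Fin n` contains a copy of `H`
in color `j` via a strictly increasing embedding. -/
def ContainsOrd {m n k : ℕ} (H : SimpleGraph (Fin m))
    (χ : Fin n → Fin n → Fin k) (j : Fin k) : Prop :=
  ∃ φ : Fin m → Fin n, StrictMono φ ∧ ∀ u v : Fin m, H.Adj u v → χ (φ u) (φ v) = j

/-- Contains a copy via an embedding that is increasing up to a cyclic permutation. -/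
def ContainsCyc {m n k : ℕ} (H : SimpleGraph (Fin m))
    (χ : Fin n → Fin n → Fin k) (j : Fin k) : Prop :=
  ∃ φ : Fin m → Fin n, (∃ t : Fin m, StrictMono fun i : Fin m => φ (i + t)) ∧
    ∀ u v : Fin m, H.Adj u v → χ (φ u) (φ v) = j

/-- Contains a copy via an arbitrary injective embedding. -/
def ContainsStd {m n k : ℕ} (H : SimpleGraph (Fin m))
    (χ : Fin n → Fin n → Fin k) (j : Fin k) : Prop :=
  ∃ φ : Fin m → Fin n, Function.Injective φ ∧ ∀ u v : Fin m, H.Adj u v → χ (φ u) (φ v) = j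

/-- The ordered Ramsey number of a family of graphs. -/
noncomputable def Rord {k : ℕ} (m : Fin k → ℕ) (H : ∀ j, SimpleGraph (Fin (m j))) : ℕ :=
  sInf {n | ∀ χ : Fin n → Fin n → Fin k, (∀ u v, χ u v = χ v u) → ∃ j, ContainsOrd (H j) χ j}

/-- The cyclic Ramsey number of a family of graphs. -/
noncomputable def Rcyc {k : ℕ} (m : Fin k → ℕ) (H : ∀ j, SimpleGraph (Fin (m j))) : ℕ :=
  sInf {n | ∀ χ : Fin n → Fin n → Fin k, (∀ u v, χ u v = χ v u) → ∃ j, ContainsCyc (H j) χ j}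

/-- The standard Ramsey number of a family of graphs. -/
noncomputable def Rstd {k : ℕ} (m : Fin k → ℕ) (H : ∀ j, SimpleGraph (Fin (m j))) : ℕ :=
  sInf {n | ∀ χ : Fin n → Fin n → Fin k, (∀ u v, χ u v = χ v u) → ∃ j, ContainsStd (H j) χ j}

/-- The two-color ordered Ramsey number. -/
noncomputable def Rord2 {a b : ℕ} (H₁ : SimpleGraph (Fin a)) (H₂ : SimpleGraph (Fin b)) : ℕ :=
  sInf {n | ∀ χ : Fin n → Fin n → Fin 2, (∀ u v, χ u v = χ v u) →
    ContainsOrd H₁ χ 0 ∨ ContainsOrd H₂ χ 1}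

/-- The two-color cyclic Ramsey number. -/
noncomputable def Rcyc2 {a b : ℕ} (H₁ : SimpleGraph (Fin a)) (H₂ : SimpleGraph (Fin b)) : ℕ :=
  sInf {n | ∀ χ : Fin n → Fin n → Fin 2, (∀ u v, χ u v = χ v u) →
    ContainsCyc H₁ χ 0 ∨ ContainsCyc H₂ χ 1}

/-- The monotone path of order `n`. -/
def monPath (n : ℕ) : SimpleGraph (Fin n) :=
  SimpleGraph.fromRel fun u v => (u : ℕ) + 1 = (v : ℕ)

/-- The monotone cycle of order `n`. -/
def monCycle (n : ℕ) : SimpleGraph (Fin n) :=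
  SimpleGraph.fromRel fun u v => (u : ℕ) + 1 = (v : ℕ) ∨ ((u : ℕ) = 0 ∧ (v : ℕ) = n - 1)

/-- The start-central star of order `n` (center `0`). -/
def starSC (n : ℕ) : SimpleGraph (Fin n) :=
  SimpleGraph.fromRel fun u _ => (u : ℕ) = 0

/-- The star of order `n` with center `c`. -/
def starG (n : ℕ) (c : Fin n) : SimpleGraph (Fin n) :=
  SimpleGraph.fromRel fun u _ => u = c

/-- The nested matching of order `n`. -/
def nestedMatching (n : ℕ) : SimpleGraph (Fin n) :=
  SimpleGraph.fromRel fun u v => (u : ℕ) + (v : ℕ) = n - 1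

/-- Rotational isomorphism of two graphs on `Fin m`. -/
def RotIso {m : ℕ} (G₁ G₂ : SimpleGraph (Fin m)) : Prop :=
  ∃ s : Fin m, ∀ u v : Fin m, G₁.Adj u v ↔ G₂.Adj (u + s) (v + s)

open Finset
open Classical in
noncomputable def chainLen {n : ℕ} (P : Fin n → Fin n → Prop) : Fin n → ℕ
  | v => 1 + ((Finset.univ.filter fun u => u < v ∧ P u v).attach.sup fun u => chainLen P u.1)
termination_by v => v.val
decreasing_by
  exact (Finset.mem_filter.mp u.2).2.1

open Classical in
lemma chainLen_extract {n : ℕ} (P : Fin n → Fin n → Prop) :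
    ∀ m (v : Fin n), m + 1 ≤ chainLen P v →
    ∃ g : ℕ → Fin n, g m = v ∧ ∀ i < m, g i < g (i + 1) ∧ P (g i) (g (i + 1)) := by
  intro m
  induction m with
  | zero => intro v _; exact ⟨fun _ => v, rfl, by omega⟩
  | succ m ih =>
    intro v hv
    rw [chainLen] at hv
    set s := (Finset.univ.filter fun u => u < v ∧ P u v).attach with hs
    have hsup : m + 1 ≤ s.sup fun u => chainLen P u.1 := by omega
    have hne : s.Nonempty := by
      by_contra h
      rw [Finset.not_nonempty_iff_eq_empty] at h
      rw [h] at hsup; simp at hsup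
    obtain ⟨u, hu, hequ⟩ := Finset.exists_mem_eq_sup s hne fun u => chainLen P u.1
    have hcu : m + 1 ≤ chainLen P u.1 := by omega
    obtain ⟨g, hgm, hgc⟩ := ih u.1 hcu
    have humem := Finset.mem_filter.mp u.2
    refine ⟨fun i => if i ≤ m then g i else v, by simp, ?_⟩
    intro i hi
    rcases Nat.lt_or_ge i m with h | h
    · have h1 : i ≤ m := by omega
      have h2 : i + 1 ≤ m := by omega
      simpa [h1, h2] using hgc i h
    · have hieq : i = m := by omega
      subst hieq
      simp only [le_refl, if_pos, if_neg (by omega : ¬ i + 1 ≤ i)]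
      exact ⟨hgm ▸ humem.2.1, hgm ▸ humem.2.2⟩
open SimpleGraph Finset

lemma star_cyc {a n : ℕ} (ha : 1 ≤ a) (c : Fin a) (χ : Fin n → Fin n → Fin 2)
    (hsym : ∀ u v, χ u v = χ v u)
    (T : Finset (Fin n)) (hT : T.card = a) (v : Fin n) (hv : v ∈ T)
    (h0 : ∀ w ∈ T, w ≠ v → χ v w = 0) :
    ContainsCyc (starG a c) χ 0 := by
  haveI : NeZero a := ⟨by omega⟩
  let e := T.orderIsoOfFin hT
  let p : Fin a := e.symm ⟨v, hv⟩
  refine ⟨fun i => (e (i - c + p) : Fin n), ⟨c - p, ?_⟩, ?_⟩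
  · have key : ∀ i : Fin a, i + (c - p) - c + p = i := by intro i; abel
    have : (fun i : Fin a => ((e (i + (c - p) - c + p) : T) : Fin n)) =
        fun i : Fin a => ((e i : T) : Fin n) := by
      funext i; rw [key]
    rw [this]
    exact fun x y hxy => by
      have := e.strictMono hxy
      exact this
  · intro u w hadj
    rw [starG, SimpleGraph.fromRel_adj] at hadj
    obtain ⟨hne, hc⟩ := hadj
    have hφv : ∀ i : Fin a, i ≠ c → ((e (i - c + p) : T) : Fin n) ≠ v := by
      intro i hic heq
      have hvp : (e p : T) = ⟨v, hv⟩ := by simp [p]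
      have : e (i - c + p) = e p := by
        apply Subtype.ext
        rw [heq, hvp]
      have h2 : i - c + p = p := e.injective this
      have : i - c = 0 := by
        have := congrArg (fun x => x - p) h2
        simpa using this
      apply hic
      have := congrArg (fun x => x + c) this
      simpa [sub_add_cancel] using this
    have hφc : ((e (c - c + p) : T) : Fin n) = v := by
      have : c - c + p = p := by abel
      rw [this]
      simp [p]
    have hmem : ∀ i : Fin a, ((e (i - c + p) : T) : Fin n) ∈ T := fun i => (e _).2
    rcases hc with rfl | rfl
    · beta_reduce
      rw [hφc]
      exact h0 _ (hmem w) (by simpa using hφv w (Ne.symm hne))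
    · beta_reduce
      rw [hφc, hsym]
      exact h0 _ (hmem u) (by simpa using hφv u hne)

lemma chainLen_pos {n : ℕ} (P : Fin n → Fin n → Prop) (v : Fin n) : 1 ≤ chainLen P v := by
  rw [chainLen]; omega

open Classical in
lemma chainLen_lt {n : ℕ} (P : Fin n → Fin n → Prop) {u v : Fin n} (h1 : u < v) (h2 : P u v) :
    chainLen P u < chainLen P v := by
  conv_rhs => rw [chainLen]
  have hm : u ∈ Finset.univ.filter fun w => w < v ∧ P w v := by
    simp [h1, h2]
  have := Finset.le_sup (f := fun w : {x // x ∈ Finset.univ.filter fun w => w < v ∧ P w v} => chainLen P w.1)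
    (Finset.mem_attach _ ⟨u, hm⟩)
  simpa using Nat.lt_succ_of_le (by simpa using this) |>.trans_le (by omega)

lemma fin2_ne_zero {x : Fin 2} (h : x ≠ 0) : x = 1 := by omega
lemma fin2_ne_one {x : Fin 2} (h : x ≠ 1) : x = 0 := by omega


lemma upper {a b : ℕ} (ha : 1 ≤ a) (hb : 2 ≤ b) (c : Fin a)
    (χ : Fin (1 + (a-1)*(b-1)) → Fin (1 + (a-1)*(b-1)) → Fin 2)
    (hsym : ∀ u v, χ u v = χ v u) :
    ContainsCyc (starG a c) χ 0 ∨ ContainsCyc (monCycle b) χ 1 := by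
  classical
  haveI : NeZero b := ⟨by omega⟩
  by_cases Hstar : ∃ v : Fin (1 + (a-1)*(b-1)),
      a - 1 ≤ (univ.filter fun w => w ≠ v ∧ χ v w = 0).card
  · obtain ⟨v, hv⟩ := Hstar
    obtain ⟨W, hWsub, hWcard⟩ := Finset.exists_subset_card_eq hv
    have hvW : v ∉ W := fun h => ((Finset.mem_filter.mp (hWsub h)).2.1) rfl
    left
    refine star_cyc ha c χ hsym (insert v W) ?_ v (mem_insert_self _ _) ?_
    · rw [Finset.card_insert_of_notMem hvW, hWcard]; omega
    · intro w hw hne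
      rcases Finset.mem_insert.mp hw with rfl | hwW
      · exact absurd rfl hne
      · exact (Finset.mem_filter.mp (hWsub hwW)).2.2
  · push_neg at Hstar
    set z : Fin (1 + (a-1)*(b-1)) := ⟨0, by omega⟩ with hz
    have ha2 : 2 ≤ a := by have := Hstar z; omega
    set S : Finset (Fin (1 + (a-1)*(b-1))) := univ.filter fun v => z < v ∧ χ z v = 1 with hS
    have hbadz := Hstar z
    have hsub : univ.erase z ⊆ S ∪ (univ.filter fun w => w ≠ z ∧ χ z w = 0) := by
      intro v hv
      have hvz : v ≠ z := (Finset.mem_erase.mp hv).1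
      have hzv : z < v := by
        have h2 : (0:ℕ) < v.val := Nat.pos_of_ne_zero (fun h => hvz (Fin.ext (by simp [hz, h])))
        exact h2
      by_cases h1 : χ z v = 1
      · exact Finset.mem_union_left _ (Finset.mem_filter.mpr ⟨mem_univ _, hzv, h1⟩)
      · exact Finset.mem_union_right _ (Finset.mem_filter.mpr ⟨mem_univ _, hvz, fin2_ne_one h1⟩)
    have herase : (univ.erase z).card = (a-1)*(b-1) := by
      rw [Finset.card_erase_of_mem (mem_univ _), Finset.card_univ, Fintype.card_fin]
      omega
    have hcard1 : (a-1)*(b-1) ≤ S.card + (univ.filter fun w => w ≠ z ∧ χ z w = 0).card := by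
      calc (a-1)*(b-1) = (univ.erase z).card := herase.symm
        _ ≤ (S ∪ _).card := Finset.card_le_card hsub
        _ ≤ _ := Finset.card_union_le _ _
    have hmul : (a-1)*(b-1) = (a-1)*(b-2) + (a-1) := by
      have h3 : b - 1 = (b-2) + 1 := by omega
      rw [h3, Nat.mul_add, Nat.mul_one]
    have hScard : (a-1)*(b-2) + 1 ≤ S.card := by omega
    set P : Fin (1 + (a-1)*(b-1)) → Fin (1 + (a-1)*(b-1)) → Prop :=
      fun u v => (z < u ∧ χ z u = 1) ∧ (z < v ∧ χ z v = 1) ∧ χ u v = 1 with hP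
    by_cases Hpath : ∃ v ∈ S, b - 1 ≤ chainLen P v
    · right
      obtain ⟨v, hvS, hlen⟩ := Hpath
      obtain ⟨g, hgm, hgc⟩ := chainLen_extract P (b-2) v (by omega)
      have hvS' := Finset.mem_filter.mp hvS
      have hgS : ∀ i ≤ b - 2, z < g i ∧ χ z (g i) = 1 := by
        intro i hi
        rcases Nat.lt_or_ge i (b-2) with h | h
        · exact (hgc i h).2.1
        · have h4 : i = b - 2 := by omega
          subst h4
          rw [hgm]; exact hvS'.2
      have hgmono : ∀ i j, i < j → j ≤ b - 2 → g i < g j := by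
        intro i j
        induction j with
        | zero => omega
        | succ j ihj =>
          intro hij hj
          rcases Nat.lt_or_ge i j with h | h
          · exact (ihj h (by omega)).trans (hgc j (by omega)).1
          · have h5 : i = j := by omega
            subst h5
            exact (hgc i (by omega)).1
      set φ : Fin b → Fin (1 + (a-1)*(b-1)) := fun i => if i.val = 0 then z else g (i.val - 1)
        with hφ
      have hφmono : StrictMono φ := by
        intro i j hij
        have hij' : i.val < j.val := hij
        have hj0 : j.val ≠ 0 := by omega
        have hjb : j.val - 1 ≤ b - 2 := by have := j.isLt; omega
        by_cases hi0 : i.val = 0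
        · simp only [hφ, hi0, if_pos, if_neg hj0]
          exact (hgS _ hjb).1
        · simp only [hφ, if_neg hi0, if_neg hj0]
          exact hgmono _ _ (by omega) hjb
      refine ⟨φ, ⟨0, ?_⟩, ?_⟩
      · have h6 : (fun i : Fin b => φ (i + 0)) = φ := by funext i; simp
        rw [h6]; exact hφmono
      · intro u w hadj
        rw [monCycle, SimpleGraph.fromRel_adj] at hadj
        obtain ⟨hne, hr⟩ := hadj
        have key : ∀ u w : Fin b, (u.val + 1 = w.val ∨ (u.val = 0 ∧ w.val = b - 1)) →
            χ (φ u) (φ w) = 1 := by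
          intro u w hr
          have hwb := w.isLt
          rcases hr with h | ⟨h0, hb1⟩
          · have hw0 : w.val ≠ 0 := by omega
            by_cases hu0 : u.val = 0
            · simp only [hφ, hu0, if_pos, if_neg hw0]
              exact (hgS _ (by omega)).2
            · simp only [hφ, if_neg hu0, if_neg hw0]
              have h1 : u.val - 1 < b - 2 := by omega
              have h2 : u.val - 1 + 1 = w.val - 1 := by omega
              have h7 := (hgc (u.val - 1) h1).2.2.2
              rwa [h2] at h7
          · have hw0 : w.val ≠ 0 := by omega
            simp only [hφ, h0, if_pos, if_neg hw0, hb1]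
            exact (hgS _ (by omega)).2
        rcases hr with h | h
        · exact key u w h
        · rw [hsym]; exact key w u h
    · left
      push_neg at Hpath
      have hmaps : ∀ v ∈ S, chainLen P v ∈ Finset.Icc 1 (b-2) := by
        intro v hv
        exact Finset.mem_Icc.mpr ⟨chainLen_pos P v, by have := Hpath v hv; omega⟩
      have hlt : (Finset.Icc 1 (b-2)).card * (a-1) < S.card := by
        rw [Nat.card_Icc]
        have h8 : b - 2 + 1 - 1 = b - 2 := by omega
        rw [h8, Nat.mul_comm]
        omega
      obtain ⟨y, _, hycard⟩ := Finset.exists_lt_card_fiber_of_mul_lt_card_of_maps_to hmaps hlt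
      obtain ⟨T, hTsub, hTcard⟩ := Finset.exists_subset_card_eq
        (show a ≤ (S.filter fun x => chainLen P x = y).card by omega)
      have hTS : ∀ u ∈ T, (z < u ∧ χ z u = 1) ∧ chainLen P u = y := by
        intro u hu
        have h9 := Finset.mem_filter.mp (hTsub hu)
        exact ⟨(Finset.mem_filter.mp h9.1).2, h9.2⟩
      have haux : ∀ u ∈ T, ∀ w ∈ T, u < w → χ u w = 0 := by
        intro u hu w hw hlt'
        by_contra hne0
        have h1 : χ u w = 1 := fin2_ne_zero hne0
        have hPuw : P u w := ⟨(hTS u hu).1, (hTS w hw).1, h1⟩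
        have h10 := chainLen_lt P hlt' hPuw
        rw [(hTS u hu).2, (hTS w hw).2] at h10
        omega
      have hpair : ∀ u ∈ T, ∀ w ∈ T, u ≠ w → χ u w = 0 := by
        intro u hu w hw hne
        rcases lt_trichotomy u w with h | h | h
        · exact haux u hu w hw h
        · exact absurd h hne
        · rw [hsym]; exact haux w hw u hu h
      obtain ⟨v0, hv0⟩ := Finset.card_pos.mp (show 0 < T.card by omega)
      exact star_cyc ha c χ hsym T hTcard v0 hv0
        (fun w hw hne => hpair v0 hv0 w hw (Ne.symm hne))

lemma lower {a b : ℕ} (ha : 1 ≤ a) (hb : 2 ≤ b) (c : Fin a) :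
    ∃ χ : Fin ((a-1)*(b-1)) → Fin ((a-1)*(b-1)) → Fin 2, (∀ u v, χ u v = χ v u) ∧
      ¬ ContainsCyc (starG a c) χ 0 ∧ ¬ ContainsCyc (monCycle b) χ 1 := by
  classical
  rcases Nat.lt_or_ge a 2 with ha1 | ha2
  · have hzero : (a-1)*(b-1) = 0 := by
      have h0 : a - 1 = 0 := by omega
      simp [h0]
    refine ⟨fun _ _ => 0, fun _ _ => rfl, ?_, ?_⟩
    · rintro ⟨φ, -, -⟩
      exact absurd (φ ⟨0, by omega⟩).isLt (by omega)
    · rintro ⟨φ, -, -⟩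
      exact absurd (φ ⟨0, by omega⟩).isLt (by omega)
  · haveI : NeZero a := ⟨by omega⟩
    haveI : NeZero b := ⟨by omega⟩
    have hA : 0 < a - 1 := by omega
    refine ⟨fun u v => if u.val / (a-1) = v.val / (a-1) then 0 else 1, ?_, ?_, ?_⟩
    · intro u v
      beta_reduce
      by_cases h : u.val / (a-1) = v.val / (a-1)
      · rw [if_pos h, if_pos h.symm]
      · rw [if_neg h, if_neg (fun h' => h h'.symm)]
    · rintro ⟨φ, ⟨t, hmono⟩, hcol⟩
      have hinj : Function.Injective φ := by
        intro x y hxy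
        have h1 : φ (x - t + t) = φ (y - t + t) := by rw [sub_add_cancel, sub_add_cancel, hxy]
        have h2 := hmono.injective h1
        have h3 := congrArg (fun w => w + t) h2
        simpa [sub_add_cancel] using h3
      set K := (φ c).val / (a-1) with hK
      have hall : ∀ i : Fin a, (φ i).val / (a-1) = K := by
        intro i
        by_cases h : i = c
        · rw [h]
        · have hadj : (starG a c).Adj c i := by
            rw [starG, SimpleGraph.fromRel_adj]
            exact ⟨fun h' => h h'.symm, Or.inl rfl⟩
          have hc := hcol c i hadj
          beta_reduce at hc
          by_cases hcond : (φ c).val / (a-1) = (φ i).val / (a-1)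
          · exact hcond.symm
          · rw [if_neg hcond] at hc
            exact absurd hc (by decide)
      have hbound : ∀ i : Fin a, (φ i).val ∈ Finset.Ico ((a-1)*K) ((a-1)*K + (a-1)) := by
        intro i
        have hdm := Nat.div_add_mod (φ i).val (a-1)
        rw [hall i] at hdm
        obtain ⟨m, hm_lt, hm_eq⟩ : ∃ m, m < a - 1 ∧ (a-1)*K + m = (φ i).val :=
          ⟨_, Nat.mod_lt _ hA, hdm⟩
        rw [Finset.mem_Ico]
        constructor
        · exact Nat.le.intro hm_eq
        · rw [← hm_eq]
          exact Nat.add_lt_add_left hm_lt _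
      have hvinj : Function.Injective fun i : Fin a => (φ i).val :=
        fun x y h => hinj (Fin.val_injective h)
      have hcard : (Finset.univ.image fun i : Fin a => (φ i).val).card = a := by
        rw [Finset.card_image_of_injective _ hvinj, Finset.card_univ, Fintype.card_fin]
      have hsubI : (Finset.univ.image fun i : Fin a => (φ i).val) ⊆
          Finset.Ico ((a-1)*K) ((a-1)*K + (a-1)) := by
        intro x hx
        obtain ⟨i, -, rfl⟩ := Finset.mem_image.mp hx
        exact hbound i
      have hfin := Finset.card_le_card hsubI
      rw [hcard, Nat.card_Ico] at hfin
      omega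
    · rintro ⟨φ, ⟨t, hmono⟩, hcol⟩
      have hv1 : ((1 : Fin b)).val = 1 := by
        rw [Fin.val_one']
        exact Nat.mod_eq_of_lt (by omega)
      have hedge : ∀ j : Fin b, (monCycle b).Adj j (j + 1) := by
        intro j
        have hval : ((j + 1 : Fin b)).val = (j.val + 1) % b := by
          rw [Fin.add_def, hv1]
        have hjb := j.isLt
        rw [monCycle, SimpleGraph.fromRel_adj]
        constructor
        · intro h
          have hv := congrArg Fin.val h
          rw [hval] at hv
          rcases Nat.lt_or_ge (j.val + 1) b with h2 | h2
          · rw [Nat.mod_eq_of_lt h2] at hv; omega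
          · have h3 : (j.val + 1) % b = 0 := by
              have h4 : j.val + 1 = b := by omega
              rw [h4]; exact Nat.mod_self b
            rw [h3] at hv; omega
        · rcases Nat.lt_or_ge (j.val + 1) b with h2 | h2
          · left; left; rw [hval, Nat.mod_eq_of_lt h2]
          · right
            right
            have h3 : j.val + 1 = b := by omega
            constructor
            · rw [hval, h3, Nat.mod_self]
            · omega
      have hsucc : ∀ j : Fin b, j.val + 1 < b → ((j + 1 : Fin b)).val = j.val + 1 := by
        intro j hj
        rw [Fin.add_def, hv1]
        exact Nat.mod_eq_of_lt hj
      have hconsec : ∀ j : Fin b, (j.val + 1 < b) →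
          (φ ((j + t) + 1)).val / (a-1) ≠ (φ (j + t)).val / (a-1) ∧
          (φ (j + t)).val < (φ ((j + t) + 1)).val := by
        intro j hj
        have hcadj := hcol (j + t) ((j + t) + 1) (hedge (j + t))
        beta_reduce at hcadj
        constructor
        · intro heq
          rw [if_pos heq.symm] at hcadj
          exact absurd hcadj (by decide)
        · have hlt : j < j + 1 := Fin.lt_def.mpr (by rw [hsucc j hj]; omega)
          have h4 : (j + 1) + t = (j + t) + 1 := by abel
          have h5 := hmono hlt
          simpa [h4] using h5
      have hclaim : ∀ i : ℕ, ∀ hi : i < b, i ≤ (φ ((⟨i, hi⟩ : Fin b) + t)).val / (a-1) := by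
        intro i
        induction i with
        | zero => intro hi; exact Nat.zero_le _
        | succ i ih =>
          intro hi
          have hib : i < b := by omega
          have hprev := ih hib
          obtain ⟨hne, hlt⟩ := hconsec ⟨i, hib⟩ (by simpa using hi)
          have hstep : ((⟨i, hib⟩ : Fin b) + 1) = (⟨i+1, hi⟩ : Fin b) :=
            Fin.ext (by rw [hsucc ⟨i, hib⟩ (by simpa using hi)])
          have hdivle : (φ ((⟨i, hib⟩ : Fin b) + t)).val / (a-1) ≤
              (φ (((⟨i, hib⟩ : Fin b) + t) + 1)).val / (a-1) :=
            Nat.div_le_div_right (le_of_lt hlt)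
          have h5 : ((⟨i+1, hi⟩ : Fin b) + t) = ((⟨i, hib⟩ : Fin b) + t) + 1 := by
            rw [← hstep]; abel
          rw [h5]
          have h6 : (φ ((⟨i, hib⟩ : Fin b) + t)).val / (a-1) <
              (φ (((⟨i, hib⟩ : Fin b) + t) + 1)).val / (a-1) :=
            lt_of_le_of_ne hdivle (fun h => hne h.symm)
          exact Nat.succ_le_of_lt (lt_of_le_of_lt hprev h6)
      have hlast := hclaim (b-1) (by omega)
      have hisLt := (φ ((⟨b-1, by omega⟩ : Fin b) + t)).isLt
      have hdlt : (φ ((⟨b-1, by omega⟩ : Fin b) + t)).val / (a-1) < b - 1 := by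
        rw [Nat.div_lt_iff_lt_mul hA]
        calc (φ _).val < (a-1)*(b-1) := hisLt
          _ = (b-1)*(a-1) := Nat.mul_comm _ _
      exact absurd hdlt (Nat.not_lt.mpr hlast)

lemma containsCyc_restrict {m k n n' : ℕ} (h : n ≤ n') (H : SimpleGraph (Fin m))
    (χ : Fin n' → Fin n' → Fin k) (j : Fin k)
    (hc : ContainsCyc H (fun u v => χ (Fin.castLE h u) (Fin.castLE h v)) j) :
    ContainsCyc H χ j := by
  obtain ⟨φ, ⟨t, hmono⟩, hcol⟩ := hc
  refine ⟨fun i => Fin.castLE h (φ i), ⟨t, ?_⟩, fun u v huv => hcol u v huv⟩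
  intro x y hxy
  exact hmono hxy

theorem stmt11 (a b : ℕ) (ha : 1 ≤ a) (hb : 2 ≤ b) (c : Fin a) :
    Rcyc2 (starG a c) (monCycle b) = 1 + (a - 1) * (b - 1) := by
  have hmem : (1 + (a - 1) * (b - 1)) ∈ {n | ∀ χ : Fin n → Fin n → Fin 2,
      (∀ u v, χ u v = χ v u) → ContainsCyc (starG a c) χ 0 ∨ ContainsCyc (monCycle b) χ 1} :=
    fun χ hsym => upper ha hb c χ hsym
  rw [Rcyc2]
  apply le_antisymm
  · exact Nat.sInf_le hmem
  · apply le_csInf ⟨_, hmem⟩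
    intro n hn
    by_contra hcon
    push_neg at hcon
    have hle : n ≤ (a - 1) * (b - 1) := by omega
    obtain ⟨χbad, hsym, hs, hc⟩ := lower ha hb c
    have hres := hn (fun u v => χbad (Fin.castLE hle u) (Fin.castLE hle v))
      (fun u v => hsym _ _)
    rcases hres with h1 | h1
    · exact hs (containsCyc_restrict hle _ _ _ h1)
    · exact hc (containsCyc_restrict hle _ _ _ h1)
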